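/- Let K be a group with a compact T₁ topology in which multiplication is separately continuous and inversion is continuous. Let H be the intersection of the closures of all neighborhoods of the identity, and assume H is a closed normal subgroup such that the quotient K/H with the quotient topology is a compact Hausdorff topological group. Then for a closed subgroup F of K, the quotient space K/F is Hausdorff if and only if H ⊆ F. -/

import Mathlib

/-- The coset space of a topological group by a closed subgroup is Hausdorff. -/
lemma aux_t2_coset {G : Type*} [Group G] [TopologicalSpace G] [IsTopologicalGroup G]
    (S : Subgroup G) (hS : IsClosed (S : Set G)) : T2Space (G ⧸ S) := by
  rw [t2_iff_isClosed_diagonal]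
  have hq := QuotientGroup.isOpenQuotientMap_mk (N := S)
  rw [← (hq.prodMap hq).isQuotientMap.isClosed_preimage]
  have : (Prod.map QuotientGroup.mk QuotientGroup.mk : G × G → (G ⧸ S) × (G ⧸ S)) ⁻¹'
      (Set.diagonal (G ⧸ S)) = (fun p : G × G => p.1⁻¹ * p.2) ⁻¹' (S : Set G) := by
    ext ⟨a, b⟩
    simp only [Set.mem_preimage, Set.mem_diagonal_iff, Prod.map, SetLike.mem_coe]
    exact QuotientGroup.eq
  rw [this]
  exact hS.preimage (by continuity)

/-- Let `K` be a group with a compact `T₁` topology, multiplication separately continuous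
and inversion continuous. Let `H` be the (normal, closed) subgroup whose underlying set is
the intersection of the closures of all neighborhoods of the identity, and suppose the
quotient `K/H` (with the quotient topology) is a compact Hausdorff topological group. Then
for any closed subgroup `F` of `K`, the quotient space `K/F` is Hausdorff iff `H ≤ F`. -/
theorem quotient_hausdorff_iff_contains_H
    (K : Type*) [Group K] [TopologicalSpace K] [CompactSpace K] [T1Space K]
    (hl : ∀ a : K, Continuous fun x : K => a * x)
    (hr : ∀ a : K, Continuous fun x : K => x * a)
    (hinv : Continuous fun x : K => x⁻¹)
    (H : Subgroup K) [H.Normal]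
    (hH : (H : Set K) = ⋂ V ∈ nhds (1 : K), closure V)
    (hHclosed : IsClosed (H : Set K))
    (hcompact : CompactSpace (K ⧸ H)) (hT2 : T2Space (K ⧸ H))
    (htopgrp : IsTopologicalGroup (K ⧸ H)) :
    ∀ F : Subgroup K, IsClosed (F : Set K) → (T2Space (K ⧸ F) ↔ H ≤ F) := by
  intro F hF
  constructor
  · -- T2 implies H ≤ F
    intro hT2F h hh
    have hcl : ∀ V ∈ nhds (1 : K), h ∈ closure V := by
      have : h ∈ (⋂ V ∈ nhds (1 : K), closure V) := hH ▸ hh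
      simpa using this
    have key : (QuotientGroup.mk h : K ⧸ F) = QuotientGroup.mk 1 := by
      by_contra hne
      obtain ⟨U, V, hU, hV, hmU, hmV, hdisj⟩ := t2_separation (Ne.symm hne)
      have h1 : (QuotientGroup.mk ⁻¹' U : Set K) ∈ nhds (1 : K) :=
        (QuotientGroup.continuous_mk.isOpen_preimage U hU).mem_nhds hmU
      have h2 := hcl _ h1
      have h3 : h ∈ (QuotientGroup.mk ⁻¹' V : Set K) := hmV
      rcases mem_closure_iff.mp h2 _ (QuotientGroup.continuous_mk.isOpen_preimage V hV) h3
        with ⟨x, hxV, hxU⟩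
      exact Set.disjoint_left.mp hdisj hxU hxV
    have := (QuotientGroup.eq (s := F)).mp key.symm
    simpa using this
  · -- H ≤ F implies T2
    intro hHF
    haveI := htopgrp
    set π : K →* K ⧸ H := QuotientGroup.mk' H with hπ
    have hπc : Continuous π := QuotientGroup.continuous_mk
    set F' : Subgroup (K ⧸ H) := F.map π with hF'
    have hF'closed : IsClosed (F' : Set (K ⧸ H)) := by
      have hcomp : IsCompact (π '' (F : Set K)) := (hF.isCompact).image hπc
      have : (F' : Set (K ⧸ H)) = π '' (F : Set K) := Subgroup.coe_map π F
      rw [this]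
      exact hcomp.isClosed
    have hcomap : F'.comap π = F := by
      rw [hF', Subgroup.comap_map_eq, QuotientGroup.ker_mk']
      exact sup_eq_left.mpr hHF
    haveI hT2' : T2Space ((K ⧸ H) ⧸ F') := aux_t2_coset F' hF'closed
    -- the natural injection K ⧸ F → (K ⧸ H) ⧸ F'
    have hwd : ∀ a b : K, (QuotientGroup.leftRel F) a b →
        (QuotientGroup.mk (π a) : (K ⧸ H) ⧸ F') = QuotientGroup.mk (π b) := by
      intro a b hab
      rw [QuotientGroup.leftRel_apply] at hab
      apply (QuotientGroup.eq (s := F')).mpr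
      rw [← map_inv, ← map_mul]
      exact Subgroup.mem_map_of_mem π hab
    let φ : K ⧸ F → (K ⧸ H) ⧸ F' := Quotient.lift (fun k => QuotientGroup.mk (π k)) hwd
    have hφc : Continuous φ :=
      continuous_quot_lift _ (QuotientGroup.continuous_mk.comp hπc)
    have hφinj : Function.Injective φ := by
      intro x y
      refine Quotient.inductionOn₂ x y ?_
      intro a b hab
      have : (QuotientGroup.mk (π a) : (K ⧸ H) ⧸ F') = QuotientGroup.mk (π b) := hab
      have h2 := (QuotientGroup.eq (s := F')).mp this
      rw [← map_inv, ← map_mul] at h2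
      have : a⁻¹ * b ∈ F := by rw [← hcomap]; exact h2
      exact Quotient.sound ((QuotientGroup.leftRel_apply).mpr this)
    exact T2Space.of_injective_continuous hφinj hφc
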